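/- Let S be a unilateral weighted shift with positive bounded weights ω_n and β_n = ω_0⋯ω_{n-1} (β_0 = 1), and let r₂(S) = liminf β_n^{1/n}. Then for every non-zero x ∈ H, the closed disc {λ ∈ ℂ : |λ| ≤ r₂(S)} is contained in the local spectrum σ_S(x). -/

import Mathlib

open Filter
open scoped InnerProductSpace Topology ENNReal NNReal

section Defs

variable {X : Type*} [NormedAddCommGroup X] [NormedSpace ℂ X]

/-- The local resolvent set of `T` at `x`. -/
def localResolventSet (T : X →L[ℂ] X) (x : X) : Set ℂ :=
  {μ | ∃ U : Set ℂ, IsOpen U ∧ μ ∈ U ∧ ∃ f : ℂ → X, AnalyticOnNhd ℂ f U ∧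
    ∀ z ∈ U, (T - z • (1 : X →L[ℂ] X)) (f z) = x}

/-- The local spectrum of `T` at `x`. -/
def localSpectrum (T : X →L[ℂ] X) (x : X) : Set ℂ :=
  (localResolventSet T x)ᶜ

end Defs

variable {H : Type*} [NormedAddCommGroup H] [InnerProductSpace ℂ H] [CompleteSpace H]

private lemma shift_inner_zero (S : H →L[ℂ] H) (e : HilbertBasis ℕ ℂ H) (ω : ℕ → ℝ)
    (hS : ∀ n, S (e n) = (ω n : ℂ) • e (n + 1)) (v : H) :
    ⟪(e 0 : H), S v⟫_ℂ = 0 := by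
  have h2 : HasSum (fun m => S (e.repr v m • e m)) (S v) := (e.hasSum_repr v).mapL S
  have h3 : HasSum (fun m => (innerSL ℂ (e 0 : H)) (S (e.repr v m • e m)))
      ⟪(e 0 : H), S v⟫_ℂ := h2.mapL (innerSL ℂ (e 0 : H))
  have h4 : (fun m => (innerSL ℂ (e 0 : H)) (S (e.repr v m • e m))) = fun _ => (0 : ℂ) := by
    funext m
    have := orthonormal_iff_ite.mp e.orthonormal 0 (m + 1)
    simp [map_smul, hS m, inner_smul_right, this]
  rw [h4] at h3
  exact h3.unique hasSum_zero

private lemma shift_inner_succ (S : H →L[ℂ] H) (e : HilbertBasis ℕ ℂ H) (ω : ℕ → ℝ)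
    (hS : ∀ n, S (e n) = (ω n : ℂ) • e (n + 1)) (v : H) (n : ℕ) :
    ⟪(e (n + 1) : H), S v⟫_ℂ = (ω n : ℂ) * ⟪(e n : H), v⟫_ℂ := by
  have h2 : HasSum (fun m => S (e.repr v m • e m)) (S v) := (e.hasSum_repr v).mapL S
  have h3 : HasSum (fun m => (innerSL ℂ (e (n+1) : H)) (S (e.repr v m • e m)))
      ⟪(e (n+1) : H), S v⟫_ℂ := h2.mapL (innerSL ℂ (e (n+1) : H))
  have h4 : (fun m => (innerSL ℂ (e (n+1) : H)) (S (e.repr v m • e m)))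
      = fun m => if m = n then e.repr v n * (ω n : ℂ) else 0 := by
    funext m
    have := orthonormal_iff_ite.mp e.orthonormal (n+1) (m+1)
    simp only [map_smul, hS m, innerSL_apply_apply, inner_smul_right, this, smul_eq_mul]
    by_cases h : m = n
    · subst h; simp
    · have hne : ¬ (n + 1 = m + 1) := by omega
      simp [h, hne, Ne.symm h]
  rw [h4] at h3
  have := h3.unique (hasSum_ite_eq n (e.repr v n * (ω n : ℂ)))
  rw [this, e.repr_apply_apply, mul_comm]

private lemma vec_eq_zero (e : HilbertBasis ℕ ℂ H) (x : H)
    (h : ∀ n, ⟪(e n : H), x⟫_ℂ = 0) : x = 0 := by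
  have h1 : HasSum (fun n => e.repr x n • (e n : H)) x := e.hasSum_repr x
  have h4 : (fun n => e.repr x n • (e n : H)) = fun _ => (0 : H) := by
    funext n; rw [e.repr_apply_apply, h n, zero_smul]
  rw [h4] at h1
  exact h1.unique hasSum_zero

private lemma eventually_pow_le_prod (ω : ℕ → ℝ) (hpos : ∀ n, 0 < ω n) {ρ : ℝ} (hρ0 : 0 ≤ ρ)
    (hρ : ρ < atTop.liminf fun n : ℕ => (∏ i ∈ Finset.range n, ω i) ^ ((n : ℝ)⁻¹)) :
    ∀ᶠ n in atTop, ρ ^ n ≤ ∏ i ∈ Finset.range n, ω i := by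
  have hb : IsBoundedUnder (· ≥ ·) atTop
      (fun n : ℕ => (∏ i ∈ Finset.range n, ω i) ^ ((n : ℝ)⁻¹)) :=
    isBoundedUnder_of ⟨0, fun n =>
      Real.rpow_nonneg (Finset.prod_nonneg fun i _ => (hpos i).le) _⟩
  have h1 := eventually_lt_of_lt_liminf hρ hb
  filter_upwards [h1, eventually_ge_atTop 1] with n hn hn1
  have hβ : (0 : ℝ) < ∏ i ∈ Finset.range n, ω i := Finset.prod_pos fun i _ => hpos i
  have key : ((∏ i ∈ Finset.range n, ω i) ^ ((n : ℝ)⁻¹)) ^ n = ∏ i ∈ Finset.range n, ω i := by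
    rw [← Real.rpow_natCast ((∏ i ∈ Finset.range n, ω i) ^ ((n : ℝ)⁻¹)) n,
      ← Real.rpow_mul hβ.le, inv_mul_cancel₀ (Nat.cast_ne_zero.mpr (by omega)), Real.rpow_one]
  calc ρ ^ n ≤ ((∏ i ∈ Finset.range n, ω i) ^ ((n : ℝ)⁻¹)) ^ n :=
        pow_le_pow_left₀ hρ0 hn.le n
    _ = _ := key

theorem closedBall_subset_localSpectrum (S : H →L[ℂ] H)
    (e : HilbertBasis ℕ ℂ H) (ω : ℕ → ℝ) (hpos : ∀ n, 0 < ω n)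
    (hbd : ∃ M : ℝ, ∀ n, ω n ≤ M)
    (hS : ∀ n, S (e n) = (ω n : ℂ) • e (n + 1))
    (x : H) (hx : x ≠ 0) :
    Metric.closedBall (0 : ℂ)
        (atTop.liminf fun n : ℕ => (∏ i ∈ Finset.range n, ω i) ^ ((n : ℝ)⁻¹)) ⊆
      localSpectrum S x := by
  set β : ℕ → ℝ := fun n => ∏ i ∈ Finset.range n, ω i with hβdef
  set r : ℝ := atTop.liminf fun n : ℕ => (β n) ^ ((n : ℝ)⁻¹) with hrdef
  have hβpos : ∀ n, 0 < β n := fun n => Finset.prod_pos fun i _ => hpos i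
  intro l hl
  rw [Metric.mem_closedBall, dist_zero_right] at hl
  by_contra hres
  rw [localSpectrum, Set.mem_compl_iff, not_not] at hres
  obtain ⟨U, hUopen, hlU, f, hf, hfx⟩ := hres
  have hcoeff : ∀ z ∈ U, ∀ n,
      ⟪(e n : H), x⟫_ℂ = ⟪(e n : H), S (f z)⟫_ℂ - z * ⟪(e n : H), f z⟫_ℂ := by
    intro z hz n
    rw [← hfx z hz]
    simp [ContinuousLinearMap.sub_apply, ContinuousLinearMap.smul_apply,
      ContinuousLinearMap.one_apply, inner_sub_right, inner_smul_right]
  rcases eq_or_lt_of_le ((norm_nonneg l).trans hl) with hr0 | hrpos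
  · -- r = 0, l = 0
    have hl0 : l = 0 := by
      rw [← norm_eq_zero]
      have : ‖l‖ ≤ 0 := hl.trans hr0.symm.le
      linarith [norm_nonneg l]
    subst hl0
    have hU0 : (0 : ℂ) ∈ U := hlU
    have main : ∀ n, ⟪(e n : H), x⟫_ℂ = 0 ∧ ∀ z ∈ U, z ≠ 0 → ⟪(e n : H), f z⟫_ℂ = 0 := by
      intro n
      induction n with
      | zero =>
        have h0 : ∀ z ∈ U, ⟪(e 0 : H), x⟫_ℂ = -(z * ⟪(e 0 : H), f z⟫_ℂ) := fun z hz => by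
          rw [hcoeff z hz 0, shift_inner_zero S e ω hS, zero_sub]
        have hx0 : ⟪(e 0 : H), x⟫_ℂ = 0 := by simpa using h0 0 hU0
        refine ⟨hx0, fun z hz hzne => ?_⟩
        have h1 := h0 z hz
        rw [hx0, eq_comm, neg_eq_zero] at h1
        exact (mul_eq_zero.mp h1).resolve_left hzne
      | succ n ih =>
        obtain ⟨_, ihf⟩ := ih
        have h0 : ∀ z ∈ U, z ≠ 0 →
            ⟪(e (n+1) : H), x⟫_ℂ = -(z * ⟪(e (n+1) : H), f z⟫_ℂ) := by
          intro z hz hzne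
          rw [hcoeff z hz (n+1), shift_inner_succ S e ω hS, ihf z hz hzne, mul_zero, zero_sub]
        have hfc : ContinuousAt f 0 := (hf 0 hU0).continuousAt
        have hca : ContinuousAt (fun z : ℂ => -(z * ⟪(e (n+1) : H), f z⟫_ℂ)) 0 := by
          exact (continuousAt_id.mul
            ((innerSL ℂ (e (n+1) : H)).continuous.continuousAt.comp hfc)).neg
        have htend : Tendsto (fun z : ℂ => -(z * ⟪(e (n+1) : H), f z⟫_ℂ))
            (𝓝[≠] (0 : ℂ)) (𝓝 0) := by
          have h1 := hca.tendsto.mono_left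
            (nhdsWithin_le_nhds (s := {(0 : ℂ)}ᶜ))
          simpa using h1
        have heq : (fun z : ℂ => -(z * ⟪(e (n+1) : H), f z⟫_ℂ)) =ᶠ[𝓝[≠] (0 : ℂ)]
            fun _ => ⟪(e (n+1) : H), x⟫_ℂ := by
          filter_upwards [nhdsWithin_le_nhds (hUopen.mem_nhds hU0), self_mem_nhdsWithin]
            with z hz hzne
          exact (h0 z hz hzne).symm
        have hx1 : ⟪(e (n+1) : H), x⟫_ℂ = 0 :=
          (tendsto_nhds_unique (htend.congr' heq) tendsto_const_nhds).symm
        refine ⟨hx1, fun z hz hzne => ?_⟩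
        have h1 := h0 z hz hzne
        rw [hx1, eq_comm, neg_eq_zero] at h1
        exact (mul_eq_zero.mp h1).resolve_left hzne
    exact hx (vec_eq_zero e x fun n => (main n).1)
  · -- 0 < r
    obtain ⟨μ₀, hμU, hμr⟩ : ∃ μ₀ ∈ U, ‖μ₀‖ < r := by
      rcases lt_or_eq_of_le hl with h | h
      · exact ⟨l, hlU, h⟩
      · obtain ⟨ε, hε, hball⟩ := Metric.isOpen_iff.mp hUopen l hlU
        set δ : ℝ := min (ε / (2 * r)) (1 / 2) with hδdef
        have hδpos : 0 < δ := lt_min (div_pos hε (by linarith)) (by norm_num)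
        have hδle : δ ≤ 1 / 2 := min_le_right _ _
        have hlr : ‖l‖ = r := h
        refine ⟨((1 - δ : ℝ) : ℂ) * l, hball ?_, ?_⟩
        · rw [Metric.mem_ball, dist_eq_norm]
          have hsub : ((1 - δ : ℝ) : ℂ) * l - l = -((δ : ℝ) : ℂ) * l := by
            push_cast; ring
          rw [hsub]
          have : ‖-((δ : ℝ) : ℂ) * l‖ = δ * r := by
            rw [norm_mul, norm_neg, Complex.norm_real, Real.norm_eq_abs,
              abs_of_pos hδpos, hlr]
          rw [this]
          calc δ * r ≤ ε / (2 * r) * r := by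
                have := min_le_left (ε / (2 * r)) (1 / 2)
                nlinarith
            _ = ε / 2 := by field_simp
            _ < ε := by linarith
        · rw [norm_mul, Complex.norm_real, Real.norm_eq_abs,
            abs_of_pos (by linarith : (0:ℝ) < 1 - δ), hlr]
          nlinarith
    obtain ⟨ρ, hρ1, hρ2⟩ := exists_between hμr
    have hρ0 : 0 < ρ := (norm_nonneg μ₀).trans_lt hρ1
    have hev : ∀ᶠ n in atTop, ρ ^ n ≤ β n := eventually_pow_le_prod ω hpos hρ0.le hρ2
    set c : ℕ → ℂ := fun n => ⟪(e n : H), x⟫_ℂ / ((β n : ℝ) : ℂ) with hcdef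
    set p := FormalMultilinearSeries.ofScalars ℂ c with hpdef
    have hinner_le : ∀ n, ‖⟪(e n : H), x⟫_ℂ‖ ≤ ‖x‖ := fun n => by
      have h1 := norm_inner_le_norm (𝕜 := ℂ) (e n : H) x
      rwa [e.orthonormal.1 n, one_mul] at h1
    have hρnn : ((ρ.toNNReal : ℝ)) = ρ := Real.coe_toNNReal ρ hρ0.le
    have hrad : (ρ.toNNReal : ENNReal) ≤ p.radius := by
      apply p.le_radius_of_eventually_le ‖x‖
      filter_upwards [hev] with n hn
      rw [FormalMultilinearSeries.ofScalars_norm, hρnn]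
      have hcn : ‖c n‖ = ‖⟪(e n : H), x⟫_ℂ‖ / β n := by
        rw [hcdef]
        simp only [norm_div, Complex.norm_real, Real.norm_eq_abs, abs_of_pos (hβpos n)]
      rw [hcn]
      calc ‖⟪(e n : H), x⟫_ℂ‖ / β n * ρ ^ n ≤ ‖⟪(e n : H), x⟫_ℂ‖ / β n * β n := by
            apply mul_le_mul_of_nonneg_left hn
              (div_nonneg (norm_nonneg _) (hβpos n).le)
        _ = ‖⟪(e n : H), x⟫_ℂ‖ := div_mul_cancel₀ _ (hβpos n).ne'
        _ ≤ ‖x‖ := hinner_le n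
    have hradpos : 0 < p.radius :=
      lt_of_lt_of_le (by exact_mod_cast (Real.toNNReal_pos.mpr hρ0)) hrad
    have hball' : HasFPowerSeriesOnBall p.sum p 0 ρ.toNNReal :=
      (p.hasFPowerSeriesOnBall hradpos).mono
        (by exact_mod_cast (Real.toNNReal_pos.mpr hρ0)) hrad
    have hanal : AnalyticOnNhd ℂ p.sum (Metric.ball (0 : ℂ) ρ) := by
      have := hball'.analyticOnNhd
      rwa [Metric.emetric_ball_nnreal, hρnn] at this
    -- vanishing of the sum on U ∩ {‖z‖ < r}
    have hsum0 : ∀ z ∈ U, ‖z‖ < r → p.sum z = 0 := by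
      intro z hzU hzr
      obtain ⟨σ, hσ1, hσ2⟩ := exists_between hzr
      have hσ0 : 0 < σ := (norm_nonneg z).trans_lt hσ1
      have hevσ : ∀ᶠ n in atTop, σ ^ n ≤ β n := eventually_pow_le_prod ω hpos hσ0.le hσ2
      set y := f z with hy
      set a : ℕ → ℂ := fun n => ⟪(e n : H), y⟫_ℂ * z ^ n / ((β n : ℝ) : ℂ) with hadef
      set s : ℕ → ℂ := fun n => ⟪(e n : H), S y⟫_ℂ * z ^ n / ((β n : ℝ) : ℂ) with hsdef
      have hgeo : Summable (fun n : ℕ => ‖y‖ * (‖z‖ / σ) ^ n) :=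
        (summable_geometric_of_lt_one (by positivity)
          ((div_lt_one hσ0).mpr hσ1)).mul_left _
      have hbound : ∀ n, σ ^ n ≤ β n →
          ‖⟪(e n : H), y⟫_ℂ * z ^ n / ((β n : ℝ) : ℂ)‖ ≤ ‖y‖ * (‖z‖ / σ) ^ n := by
        intro n hn
        have h1 : ‖⟪(e n : H), y⟫_ℂ‖ ≤ ‖y‖ := by
          have := norm_inner_le_norm (𝕜 := ℂ) (e n : H) y
          rwa [e.orthonormal.1 n, one_mul] at this
        have h2 : (0 : ℝ) < σ ^ n := by positivity
        have h3 : 1 ≤ β n / σ ^ n := (one_le_div h2).mpr hn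
        rw [norm_div, norm_mul, norm_pow, Complex.norm_real, Real.norm_eq_abs,
          abs_of_pos (hβpos n)]
        rw [div_le_iff₀ (hβpos n)]
        calc ‖⟪(e n : H), y⟫_ℂ‖ * ‖z‖ ^ n ≤ ‖y‖ * ‖z‖ ^ n :=
              mul_le_mul_of_nonneg_right h1 (by positivity)
          _ = ‖y‖ * ‖z‖ ^ n * 1 := (mul_one _).symm
          _ ≤ ‖y‖ * ‖z‖ ^ n * (β n / σ ^ n) :=
              mul_le_mul_of_nonneg_left h3 (by positivity)
          _ = ‖y‖ * (‖z‖ / σ) ^ n * β n := by rw [div_pow]; ring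
      have hA : Summable a := by
        apply Summable.of_norm_bounded_eventually_nat hgeo
        filter_upwards [hevσ] with n hn
        exact hbound n hn
      have hs_succ : ∀ n, s (n + 1) = z * a n := by
        intro n
        rw [hsdef, hadef]
        simp only
        rw [shift_inner_succ S e ω hS]
        have hβsucc : β (n + 1) = β n * ω n := Finset.prod_range_succ ω n
        rw [hβsucc]
        have hω : ((ω n : ℝ) : ℂ) ≠ 0 := by
          exact_mod_cast (hpos n).ne'
        have hβ : ((β n : ℝ) : ℂ) ≠ 0 := by
          exact_mod_cast (hβpos n).ne'
        push_cast
        field_simp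
        ring
      have hs0 : s 0 = 0 := by
        rw [hsdef]; simp only
        rw [shift_inner_zero S e ω hS, zero_mul, zero_div]
      have hSsum : Summable s := by
        rw [← summable_nat_add_iff 1]
        simpa only [hs_succ] using hA.mul_left z
      have hterm : ∀ n, c n * z ^ n = s n - z * a n := by
        intro n
        rw [hcdef, hsdef, hadef]
        simp only
        rw [hcoeff z hzU n]
        have hβ : ((β n : ℝ) : ℂ) ≠ 0 := by exact_mod_cast (hβpos n).ne'
        field_simp
        ring
      have hps : p.sum z = ∑' n, c n * z ^ n := by
        rw [FormalMultilinearSeries.sum]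
        exact tsum_congr fun n => by
          rw [hpdef, FormalMultilinearSeries.ofScalars_apply_eq, smul_eq_mul]
      rw [hps]
      calc ∑' n, c n * z ^ n = ∑' n, (s n - z * a n) := tsum_congr hterm
        _ = (∑' n, s n) - ∑' n, z * a n := Summable.tsum_sub hSsum (hA.mul_left z)
        _ = (∑' n, s n) - z * ∑' n, a n := by rw [tsum_mul_left]
        _ = 0 := by
            rw [Summable.tsum_eq_zero_add hSsum, hs0, zero_add]
            simp only [hs_succ]
            rw [tsum_mul_left]
            ring
    have hμball : μ₀ ∈ Metric.ball (0 : ℂ) ρ := by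
      rw [Metric.mem_ball, dist_zero_right]; exact hρ1
    have hEq : Set.EqOn p.sum 0 (Metric.ball (0 : ℂ) ρ) := by
      apply hanal.eqOn_zero_of_preconnected_of_eventuallyEq_zero
        (convex_ball (0 : ℂ) ρ).isPreconnected hμball
      have hmem : U ∩ Metric.ball (0 : ℂ) ρ ∈ 𝓝 μ₀ :=
        Filter.inter_mem (hUopen.mem_nhds hμU)
          ((Metric.isOpen_ball).mem_nhds hμball)
      filter_upwards [hmem] with z hz
      have hzr : ‖z‖ < r := by
        have := hz.2; rw [Metric.mem_ball, dist_zero_right] at this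
        exact this.trans hρ2
      exact hsum0 z hz.1 hzr
    have h0mem : (0 : ℂ) ∈ Metric.ball (0 : ℂ) ρ := Metric.mem_ball_self hρ0
    have h0ev : p.sum =ᶠ[𝓝 (0 : ℂ)] 0 := by
      filter_upwards [Metric.isOpen_ball.mem_nhds h0mem] with z hz
      exact hEq hz
    have hpz : p = 0 := hball'.hasFPowerSeriesAt.eq_zero_of_eventually h0ev
    have hc0 : c = 0 := by
      rw [hpdef] at hpz
      exact (FormalMultilinearSeries.ofScalars_series_eq_zero ℂ).mp hpz
    apply hx
    apply vec_eq_zero e x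
    intro n
    have := congrFun hc0 n
    rw [hcdef] at this
    simp only [Pi.zero_apply, div_eq_zero_iff] at this
    rcases this with h | h
    · exact h
    · exact absurd h (by exact_mod_cast (hβpos n).ne')
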